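/- If a group K is residually weakly sofic (i.e., for every nontrivial k ∈ K there is a homomorphism from K to a weakly sofic group not killing k), then K is weakly sofic. -/

import Mathlib

/-- A bi-invariant metric on a group. -/
def IsBiInvariantMetric {F : Type} [Group F] (d : F → F → ℝ) : Prop :=
  (∀ a b, d a b = 0 ↔ a = b) ∧ (∀ a b, d a b = d b a) ∧
  (∀ a b c, d a c ≤ d a b + d b c) ∧
  (∀ a b c, d (c * a) (c * b) = d a b) ∧ (∀ a b c, d (a * c) (b * c) = d a b)

/-- A group is weakly sofic if it is metrically approximable by finite groups
equipped with bi-invariant metrics. -/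
def WeaklySofic (K : Type) [Group K] : Prop :=
  ∀ (S : Finset K) (ε : ℝ), 0 < ε →
    ∃ (F : Type) (_ : Fintype F) (_ : Group F) (d : F → F → ℝ) (φ : K → F),
      IsBiInvariantMetric d ∧ φ 1 = 1 ∧
      (∀ x ∈ S, ∀ y ∈ S, d (φ (x * y)) (φ x * φ y) ≤ ε) ∧
      (∀ x ∈ S, x ≠ 1 → 1 ≤ d (φ x) 1)

/-- A residually weakly sofic group is weakly sofic. -/
theorem residually_weaklySofic_is_weaklySofic (K : Type) [Group K]
    (h : ∀ k : K, k ≠ 1 →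
      ∃ (W : Type) (_ : Group W) (f : K →* W), WeaklySofic W ∧ f k ≠ 1) :
    WeaklySofic K := by
  classical
  intro S ε hε
  choose W instW f hWS hne using h
  set T : Finset K := S.filter (fun k => k ≠ 1) with hT
  have hε' : (0:ℝ) < ε / (T.card + 1) := by positivity
  have key : ∀ i : {k // k ∈ T}, ∃ (F : Type) (_ : Fintype F) (_ : Group F)
      (d : F → F → ℝ) (ψ : K → F), IsBiInvariantMetric d ∧ ψ 1 = 1 ∧
      (∀ x ∈ S, ∀ y ∈ S, d (ψ (x * y)) (ψ x * ψ y) ≤ ε / (T.card + 1)) ∧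
      1 ≤ d (ψ i.1) 1 := by
    rintro ⟨k, hk⟩
    simp only [hT, Finset.mem_filter] at hk
    obtain ⟨hkS, hk1⟩ := hk
    obtain ⟨F, instF, instG, d, φ, hbi, hφ1, hmul, hsep⟩ :=
      hWS k hk1 (S.image (f k hk1)) (ε / (T.card + 1)) hε'
    refine ⟨F, instF, instG, d, φ ∘ (f k hk1), hbi, ?_, ?_, ?_⟩
    · simp [hφ1]
    · intro x hx y hy
      have := hmul _ (Finset.mem_image_of_mem _ hx) _ (Finset.mem_image_of_mem _ hy)
      simpa [map_mul] using this
    · exact hsep _ (Finset.mem_image_of_mem _ hkS) (hne k hk1)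
  choose F instF instG d φ hbi hφ1 hmul hsep using key
  letI : ∀ i, Fintype (F i) := instF
  letI : ∀ i, Group (F i) := instG
  have hd0 : ∀ i (a b : F i), 0 ≤ d i a b := by
    intro i a b
    have h1 := ((hbi i).1 a a).mpr rfl
    have h2 := (hbi i).2.2.1 a b a
    have h3 := (hbi i).2.1 a b
    linarith
  refine ⟨∀ i, F i, inferInstance, inferInstance,
    fun a b => ∑ i, d i (a i) (b i), fun x i => φ i x, ?_, ?_, ?_, ?_⟩
  · refine ⟨?_, ?_, ?_, ?_, ?_⟩
    · intro a b
      constructor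
      · intro h0
        funext i
        have := (Finset.sum_eq_zero_iff_of_nonneg
          (fun i _ => hd0 i (a i) (b i))).mp h0 i (Finset.mem_univ i)
        exact ((hbi i).1 _ _).mp this
      · rintro rfl
        exact Finset.sum_eq_zero fun i _ => ((hbi i).1 _ _).mpr rfl
    · intro a b; exact Finset.sum_congr rfl fun i _ => (hbi i).2.1 _ _
    · intro a b c
      calc ∑ i, d i (a i) (c i) ≤ ∑ i, (d i (a i) (b i) + d i (b i) (c i)) :=
            Finset.sum_le_sum fun i _ => (hbi i).2.2.1 _ _ _
        _ = _ := Finset.sum_add_distrib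
    · intro a b c; exact Finset.sum_congr rfl fun i _ => (hbi i).2.2.2.1 _ _ _
    · intro a b c; exact Finset.sum_congr rfl fun i _ => (hbi i).2.2.2.2 _ _ _
  · funext i; exact hφ1 i
  · intro x hx y hy
    have hc : (0:ℝ) < (T.card:ℝ) + 1 := by positivity
    calc (∑ i, d i (φ i (x * y)) ((fun i => φ i x) i * (fun i => φ i y) i))
        ≤ ∑ _i : {k // k ∈ T}, ε / (T.card + 1) :=
          Finset.sum_le_sum fun i _ => hmul i x hx y hy
      _ = (T.card : ℝ) * (ε / (T.card + 1)) := by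
          rw [Finset.sum_const, nsmul_eq_mul]
          simp [Fintype.card_coe]
      _ ≤ ε := by
          rw [mul_comm, div_mul_eq_mul_div, div_le_iff₀ hc]
          nlinarith
  · intro x hx hx1
    have hxT : x ∈ T := by simp [hT, Finset.mem_filter, hx, hx1]
    calc (1:ℝ) ≤ d ⟨x, hxT⟩ (φ ⟨x, hxT⟩ x) 1 := hsep ⟨x, hxT⟩
      _ ≤ ∑ i, d i (φ i x) ((1 : ∀ i, F i) i) :=
          Finset.single_le_sum (f := fun i => d i (φ i x) ((1 : ∀ i, F i) i))
            (fun i _ => hd0 i _ _) (Finset.mem_univ (⟨x, hxT⟩ : {k // k ∈ T}))
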